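/- (Farkas' Lemma) For a real m×n matrix A and vector b ∈ ℝᵐ, exactly one of the following holds: (i) there exists x ∈ ℝⁿ with A x ≤ b (componentwise), or (ii) there exists y ∈ ℝᵐ with y ≥ 0, yᵀA = 0, and yᵀb < 0. -/

import Mathlib

open Matrix

open Finset


section ConeClosed

variable {E : Type*} [NormedAddCommGroup E] [NormedSpace ℝ E] [FiniteDimensional ℝ E]

/-- A finitely generated cone is closed. -/
lemma cone_isClosed : ∀ (k : ℕ) (v : Fin k → E),
    IsClosed {x : E | ∃ y : Fin k → ℝ, (∀ i, 0 ≤ y i) ∧ ∑ i, y i • v i = x} := by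
  intro k
  induction k with
  | zero =>
    intro v
    have : {x : E | ∃ y : Fin 0 → ℝ, (∀ i, 0 ≤ y i) ∧ ∑ i, y i • v i = x} = {(0 : E)} := by
      ext x
      simp [eq_comm]
  
    rw [this]
    exact isClosed_singleton
  | succ k ih =>
    intro v
    by_cases hv : LinearIndependent ℝ v
    · -- the image of the nonnegative orthant under an injective linear map
      have hker : LinearMap.ker (Fintype.linearCombination ℝ v) = ⊥ := by
        rw [LinearMap.ker_eq_bot']
        intro g hg
        have hz : ∑ i, g i • v i = 0 := by
          simpa [Fintype.linearCombination_apply] using hg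
        exact funext (Fintype.linearIndependent_iff.1 hv g hz)
      have hce := LinearMap.isClosedEmbedding_of_injective (F := E) hker
      have himg : {x : E | ∃ y : Fin (k+1) → ℝ, (∀ i, 0 ≤ y i) ∧ ∑ i, y i • v i = x}
          = (Fintype.linearCombination ℝ v) '' {y | ∀ i, 0 ≤ y i} := by
        ext x
        simp [Set.mem_image, Fintype.linearCombination_apply]
      rw [himg]
      apply hce.isClosedMap
      have : {y : Fin (k+1) → ℝ | ∀ i, 0 ≤ y i} = ⋂ i, {y | 0 ≤ y i} := by
        ext y; simp
      rw [this]
      exact isClosed_iInter fun i => isClosed_le continuous_const (continuous_apply i)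
    · obtain ⟨g, hg0, i₀, hgi⟩ := Fintype.not_linearIndependent_iff.1 hv
      obtain ⟨c, hc0, i₁, hci⟩ : ∃ c : Fin (k+1) → ℝ, ∑ i, c i • v i = 0 ∧ ∃ i, 0 < c i := by
        rcases hgi.lt_or_gt with h | h
        · exact ⟨-g, by simpa using hg0, i₀, by simpa using h⟩
        · exact ⟨g, hg0, i₀, h⟩
      have hUnion : {x : E | ∃ y : Fin (k+1) → ℝ, (∀ i, 0 ≤ y i) ∧ ∑ i, y i • v i = x}
          = ⋃ i : Fin (k+1), {x : E | ∃ z : Fin k → ℝ, (∀ j, 0 ≤ z j) ∧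
              ∑ j, z j • v (i.succAbove j) = x} := by
        apply Set.Subset.antisymm
        · rintro x ⟨y, hy, hyx⟩
          set T : Finset (Fin (k+1)) := univ.filter (fun i => 0 < c i) with hT
          have hTne : T.Nonempty := ⟨i₁, by simp [hT, hci]⟩
          obtain ⟨i₀', hi₀'T, hmin⟩ := T.exists_min_image (fun i => y i / c i) hTne
          have hci₀ : 0 < c i₀' := by simpa [hT] using hi₀'T
          set t : ℝ := y i₀' / c i₀' with ht
          have ht0 : 0 ≤ t := div_nonneg (hy _) hci₀.le
          set y' : Fin (k+1) → ℝ := fun i => y i - t * c i with hy'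
          have hy'0 : ∀ i, 0 ≤ y' i := by
            intro i
            by_cases hc : 0 < c i
            · have : t ≤ y i / c i := hmin i (by simp [hT, hc])
              have := (le_div_iff₀ hc).1 this
              simp only [hy', sub_nonneg]
              linarith
            · push_neg at hc
              have : t * c i ≤ 0 := mul_nonpos_of_nonneg_of_nonpos ht0 hc
              simp only [hy', sub_nonneg]
              linarith [hy i]
          have hy'i₀ : y' i₀' = 0 := by
            simp [hy', ht, div_mul_cancel₀ _ hci₀.ne']
          have hsum : ∑ i, y' i • v i = x := by
            simp only [hy', sub_smul, Finset.sum_sub_distrib, mul_smul]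
            rw [← Finset.smul_sum, hc0, smul_zero, sub_zero, hyx]
          refine Set.mem_iUnion.2 ⟨i₀', ⟨fun j => y' (i₀'.succAbove j), fun j => hy'0 _, ?_⟩⟩
          have := Fin.sum_univ_succAbove (fun i => y' i • v i) i₀'
          rw [this, hy'i₀, zero_smul, zero_add] at hsum
          exact hsum
        · rintro x hx
          obtain ⟨i, z, hz, hzx⟩ := Set.mem_iUnion.1 hx
          refine ⟨Fin.insertNth (α := fun _ => ℝ) i 0 z, ?_, ?_⟩
          · simp only [Fin.forall_iff_succAbove i, Fin.insertNth_apply_same,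
              Fin.insertNth_apply_succAbove]
            exact ⟨le_refl 0, hz⟩
          · rw [Fin.sum_univ_succAbove
              (fun j => Fin.insertNth (α := fun _ => ℝ) i 0 z j • v j) i]
            simp [hzx]
      rw [hUnion]
      exact isClosed_iUnion_of_finite fun i => ih (fun j => v (i.succAbove j))

end ConeClosed

open scoped InnerProductSpace RealInnerProductSpace

/-- Farkas' lemma: exactly one of the two alternatives holds. -/
theorem stmt2 {m n : ℕ} (A : Matrix (Fin m) (Fin n) ℝ) (b : Fin m → ℝ) :
    Xor' (∃ x : Fin n → ℝ, ∀ i, A.mulVec x i ≤ b i)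
      (∃ y : Fin m → ℝ, (∀ i, 0 ≤ y i) ∧ Aᵀ.mulVec y = 0 ∧ ∑ i, y i * b i < 0) := by
  classical
  have hnot : ¬((∃ x : Fin n → ℝ, ∀ i, A.mulVec x i ≤ b i) ∧
      (∃ y : Fin m → ℝ, (∀ i, 0 ≤ y i) ∧ Aᵀ.mulVec y = 0 ∧ ∑ i, y i * b i < 0)) := by
    rintro ⟨⟨x, hx⟩, y, hy0, hyA, hyb⟩
    have h1 : ∑ i, y i * A.mulVec x i ≤ ∑ i, y i * b i :=
      Finset.sum_le_sum fun i _ => mul_le_mul_of_nonneg_left (hx i) (hy0 i)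
    have h2 : ∑ i, y i * A.mulVec x i = ∑ j, Aᵀ.mulVec y j * x j := by
      simp only [Matrix.mulVec, dotProduct, Matrix.transpose_apply,
        Finset.mul_sum, Finset.sum_mul]
      rw [Finset.sum_comm]
      exact Finset.sum_congr rfl fun j _ => Finset.sum_congr rfl fun i _ => by ring
    rw [hyA] at h2
    simp only [Pi.zero_apply, zero_mul, Finset.sum_const_zero] at h2
    linarith
  rcases em (∃ x : Fin n → ℝ, ∀ i, A.mulVec x i ≤ b i) with hP | hP
  · exact Or.inl ⟨hP, fun hQ => hnot ⟨hP, hQ⟩⟩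
  · refine Or.inr ⟨?_, hP⟩
    let E := EuclideanSpace ℝ (Fin (n+1))
    let v : Fin (m+1) → E :=
      Fin.snoc (fun i => WithLp.toLp 2 (Fin.snoc (A i) (b i) : Fin (n+1) → ℝ))
        (WithLp.toLp 2 (Fin.snoc (0 : Fin n → ℝ) 1 : Fin (n+1) → ℝ))
    let p : E := WithLp.toLp 2 (Fin.snoc (0 : Fin n → ℝ) (-1) : Fin (n+1) → ℝ)
    -- coordinates of the generators
    have hvAA : ∀ (i : Fin m) (j : Fin n), v (Fin.castSucc i) (Fin.castSucc j) = A i j := by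
      intro i j; simp [v]
    have hvAb : ∀ (i : Fin m), v (Fin.castSucc i) (Fin.last n) = b i := by
      intro i; simp [v]
    have hveA : ∀ (j : Fin n), v (Fin.last m) (Fin.castSucc j) = 0 := by
      intro j; simp [v]
    have hveb : v (Fin.last m) (Fin.last n) = 1 := by simp [v]
    have hpA : ∀ (j : Fin n), p (Fin.castSucc j) = 0 := by intro j; simp [p]
    have hpb : p (Fin.last n) = -1 := by simp [p]
    have sum_apply : ∀ (y : Fin (m+1) → ℝ) (j : Fin (n+1)),
        (∑ i, y i • v i) j = ∑ i, y i * v i j := by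
      intro y j
      rw [WithLp.ofLp_sum, Finset.sum_apply]
      exact Finset.sum_congr rfl fun i _ => by
        rw [PiLp.smul_apply, smul_eq_mul]
    set S := {x : E | ∃ y : Fin (m+1) → ℝ, (∀ i, 0 ≤ y i) ∧ ∑ i, y i • v i = x} with hS
    by_cases hpS : p ∈ S
    · -- extract the Farkas certificate
      obtain ⟨y, hy0, hyp⟩ := hpS
      refine ⟨fun i => y (Fin.castSucc i), fun i => hy0 _, ?_, ?_⟩
      · funext j
        have h := congrFun (congrArg WithLp.ofLp hyp) (Fin.castSucc j)
        rw [sum_apply, Fin.sum_univ_castSucc] at h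
        simp only [hvAA, hveA, mul_zero, add_zero, hpA] at h
        simpa [Matrix.mulVec, dotProduct, Matrix.transpose_apply, mul_comm] using h
      · have h := congrFun (congrArg WithLp.ofLp hyp) (Fin.last n)
        rw [sum_apply, Fin.sum_univ_castSucc] at h
        simp only [hvAb, hveb, mul_one, hpb] at h
        have := hy0 (Fin.last m)
        linarith
    · -- separation
      exfalso
      let K : ConvexCone ℝ E :=
        { carrier := S
          smul_mem' := by
            rintro c hc x ⟨y, hy, rfl⟩
            exact ⟨fun i => c * y i, fun i => mul_nonneg hc.le (hy i), by
              simp [Finset.smul_sum, mul_smul]⟩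
          add_mem' := by
            rintro x ⟨y, hy, rfl⟩ x' ⟨y', hy', rfl⟩
            exact ⟨fun i => y i + y' i, fun i => add_nonneg (hy i) (hy' i), by
              simp [add_smul, Finset.sum_add_distrib]⟩ }
      have hSclosed : IsClosed (K : Set E) := cone_isClosed (m+1) v
      have hSne : ((K : Set E)).Nonempty := ⟨0, ⟨fun _ => 0, fun _ => le_refl 0, by simp⟩⟩
      obtain ⟨z, hz1, hz2⟩ : ∃ z : E, (∀ x ∈ K, 0 ≤ ⟪x, z⟫_ℝ) ∧ ⟪z, p⟫_ℝ < 0 := by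
        let C : ProperCone ℝ E :=
          { carrier := S
            add_mem' := fun hx hy => K.add_mem' hx hy
            zero_mem' := ⟨fun _ => 0, fun _ => le_refl 0, by simp⟩
            smul_mem' := by
              rintro c x ⟨y, hy, rfl⟩
              exact ⟨fun i => c * y i, fun i => mul_nonneg c.2 (hy i), by
                simp [NNReal.smul_def, Finset.smul_sum, mul_smul]⟩
            isClosed' := hSclosed }
        obtain ⟨z, hz1, hz2⟩ := C.hyperplane_separation' (x₀ := p) hpS
        exact ⟨z, fun x hx => hz1 x hx, by rw [real_inner_comm]; exact hz2⟩
      have hinner : ∀ x : E, ⟪x, z⟫_ℝ = ∑ j, x j * z j := by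
        intro x
        rw [PiLp.inner_apply]
        exact Finset.sum_congr rfl fun j _ => by
          rw [RCLike.inner_apply, conj_trivial]; ring
      have hinner' : ∀ x : E, ⟪z, x⟫_ℝ = ∑ j, z j * x j := by
        intro x
        rw [PiLp.inner_apply]
        exact Finset.sum_congr rfl fun j _ => by
          rw [RCLike.inner_apply, conj_trivial]; ring
      have hgen : ∀ l, v l ∈ K := by
        intro l
        refine ⟨fun i => if i = l then 1 else 0, fun i => by positivity, ?_⟩
        rw [Finset.sum_eq_single l] <;> simp +contextual
      -- last coordinate of z is positive
      have htpos : 0 < z (Fin.last n) := by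
        rw [hinner', Fin.sum_univ_castSucc] at hz2
        simp only [hpA, hpb, mul_zero, Finset.sum_const_zero, zero_add] at hz2
        linarith
      -- build a feasible point
      refine hP ⟨fun j => -z (Fin.castSucc j) / z (Fin.last n), ?_⟩
      intro i
      have hge := hz1 _ (hgen (Fin.castSucc i))
      rw [hinner, Fin.sum_univ_castSucc] at hge
      simp only [hvAA, hvAb] at hge
      have hmv : A.mulVec (fun j => -z (Fin.castSucc j) / z (Fin.last n)) i
          = -(∑ j, A i j * z (Fin.castSucc j)) / z (Fin.last n) := by
        simp [Matrix.mulVec, dotProduct, Finset.sum_div, neg_div, mul_div_assoc]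
      rw [hmv, div_le_iff₀ htpos]
      nlinarith [hge]
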